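/- Let A and B be positive self-adjoint bounded operators on a Hilbert space and a ∈ [0, 1]. Then ‖A^a B^a‖ ≤ ‖A B‖^a (Cordes inequality), in the special case a = 1/2: ‖A^{1/2} B^{1/2}‖² ≤ ‖A B‖. -/

import Mathlib

set_option synthInstance.maxHeartbeats 1000000
set_option maxHeartbeats 1000000

open scoped ENNReal NNReal

private lemma biSup_nnnorm_diff_zero {𝕜 : Type*} [NormedField 𝕜] (s : Set 𝕜) :
    ⨆ k ∈ s, (‖k‖₊ : ℝ≥0∞) = ⨆ k ∈ s \ {0}, (‖k‖₊ : ℝ≥0∞) := by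
  refine le_antisymm ?_ (iSup_le fun k => iSup_le fun hk => le_iSup₂ (f := fun k _ => (‖k‖₊ : ℝ≥0∞)) k hk.1)
  refine iSup_le fun k => iSup_le fun hk => ?_
  by_cases h0 : k = 0
  · simp [h0]
  · exact le_iSup₂ (f := fun k _ => (‖k‖₊ : ℝ≥0∞)) k ⟨hk, h0⟩

private lemma spectralRadius_mul_comm {A : Type*} [Ring A] [Algebra ℂ A] (a b : A) :
    spectralRadius ℂ (a * b) = spectralRadius ℂ (b * a) := by
  unfold spectralRadius
  rw [biSup_nnnorm_diff_zero, biSup_nnnorm_diff_zero (spectrum ℂ (b * a)),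
    spectrum.nonzero_mul_comm]

/-- Cordes inequality, case `a = 1/2`: for positive (self-adjoint) bounded operators
`A`, `B` on a Hilbert space, `‖A^{1/2} B^{1/2}‖² ≤ ‖A B‖`. -/
theorem cordes_inequality_half {H : Type*} [NormedAddCommGroup H]
    [InnerProductSpace ℂ H] [CompleteSpace H]
    (A B : H →L[ℂ] H) (hA : 0 ≤ A) (hB : 0 ≤ B) :
    ‖CFC.sqrt A * CFC.sqrt B‖ ^ 2 ≤ ‖A * B‖ := by
  rcases subsingleton_or_nontrivial H with h | h
  · have : Subsingleton (H →L[ℂ] H) := inferInstance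
    simp [Subsingleton.elim (CFC.sqrt A * CFC.sqrt B) 0, Subsingleton.elim (A * B) 0]
  have hsA : IsSelfAdjoint (CFC.sqrt A) := IsSelfAdjoint.of_nonneg (CFC.sqrt_nonneg A)
  have hsB : IsSelfAdjoint (CFC.sqrt B) := IsSelfAdjoint.of_nonneg (CFC.sqrt_nonneg B)
  set T := CFC.sqrt A * CFC.sqrt B with hT
  have hstar : star T * T = CFC.sqrt B * A * CFC.sqrt B := by
    rw [hT, star_mul, hsA.star_eq, hsB.star_eq]
    rw [show CFC.sqrt B * CFC.sqrt A * (CFC.sqrt A * CFC.sqrt B)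
        = CFC.sqrt B * (CFC.sqrt A * CFC.sqrt A) * CFC.sqrt B by simp [mul_assoc],
      CFC.sqrt_mul_sqrt_self A hA]
  have hC : (0 : H →L[ℂ] H) ≤ CFC.sqrt B * A * CFC.sqrt B := by
    have := star_right_conjugate_nonneg hA (CFC.sqrt B)
    rwa [hsB.star_eq] at this
  have hCsa : IsSelfAdjoint (CFC.sqrt B * A * CFC.sqrt B) := .of_nonneg hC
  have key : (‖T‖₊ : ℝ≥0∞) ^ 2 ≤ (‖A * B‖₊ : ℝ≥0∞) := by
    calc (‖T‖₊ : ℝ≥0∞) ^ 2 = ‖star T * T‖₊ := by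
          rw [CStarRing.nnnorm_star_mul_self, sq]; norm_cast
      _ = ‖CFC.sqrt B * A * CFC.sqrt B‖₊ := by rw [hstar]
      _ = spectralRadius ℂ (CFC.sqrt B * A * CFC.sqrt B) := hCsa.spectralRadius_eq_nnnorm.symm
      _ = spectralRadius ℂ (A * B) := by
          rw [show CFC.sqrt B * A * CFC.sqrt B = CFC.sqrt B * (A * CFC.sqrt B) by rw [mul_assoc],
            spectralRadius_mul_comm, mul_assoc, CFC.sqrt_mul_sqrt_self B hB]
      _ ≤ ‖A * B‖₊ := spectrum.spectralRadius_le_nnnorm (𝕜 := ℂ) _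
  have key' : ‖T‖₊ ^ 2 ≤ ‖A * B‖₊ := by
    rw [← ENNReal.coe_pow] at key
    exact_mod_cast key
  calc ‖T‖ ^ 2 = ((‖T‖₊ ^ 2 : NNReal) : ℝ) := by push_cast [coe_nnnorm]; ring
    _ ≤ ‖A * B‖ := by exact_mod_cast key'
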